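/- Let S be the frame operator of a frame for H, and {P_N} an increasing sequence of orthogonal projections converging strongly to the identity. For f ∈ H let v_N = (P_N S P_N)⁻¹ P_N f (inverse taken on P_N(H)). Then lim_{N→∞} ‖v_N − S⁻¹ f‖ = 0. -/

import Mathlib

open scoped RealInnerProductSpace

/-- Let `S` be the frame operator of a frame (bounds `0 < A ≤ B`), `{P N}` an increasing
sequence of orthogonal projections with dense union of ranges, `v = S⁻¹ f`, and let
`v_N = (P_N S P_N)⁻¹ P_N f`, i.e. `v_N ∈ range (P N)` with `⟨S v_N, u⟩ = ⟨f, u⟩` for all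
`u ∈ range (P N)`. Then `‖v_N − S⁻¹ f‖ → 0`. -/
theorem stmt_9 {H : Type*} [NormedAddCommGroup H] [InnerProductSpace ℝ H] [CompleteSpace H]
    (S : H →L[ℝ] H) (A B : ℝ) (hA : 0 < A) (hAB : A ≤ B)
    (hsa : ∀ u v : H, ⟪S u, v⟫ = ⟪u, S v⟫)
    (hlow : ∀ u : H, A * ‖u‖ ^ 2 ≤ ⟪S u, u⟫)
    (hup : ∀ u : H, ⟪S u, u⟫ ≤ B * ‖u‖ ^ 2)
    (P : ℕ → H →L[ℝ] H)
    (hPsa : ∀ N, ∀ u v : H, ⟪P N u, v⟫ = ⟪u, P N v⟫)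
    (hPidem : ∀ N, P N ∘L P N = P N)
    (hmono : ∀ N, LinearMap.range (P N : H →ₗ[ℝ] H) ≤ LinearMap.range (P (N + 1) : H →ₗ[ℝ] H))
    (hdense : Dense (⋃ N, (LinearMap.range (P N : H →ₗ[ℝ] H) : Set H)))
    (f v : H) (hv : ∀ u : H, ⟪S v, u⟫ = ⟪f, u⟫)
    (vN : ℕ → H) (hmem : ∀ N, vN N ∈ LinearMap.range (P N : H →ₗ[ℝ] H))
    (heq : ∀ N, ∀ u ∈ LinearMap.range (P N : H →ₗ[ℝ] H), ⟪S (vN N), u⟫ = ⟪f, u⟫) :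
    Filter.Tendsto (fun N => ‖vN N - v‖) Filter.atTop (nhds 0) := by
  have hmono' : ∀ m n : ℕ, m ≤ n →
      LinearMap.range (P m : H →ₗ[ℝ] H) ≤ LinearMap.range (P n : H →ₗ[ℝ] H) := by
    intro m n h
    induction n, h using Nat.le_induction with
    | base => exact le_rfl
    | succ n hn ih => exact ih.trans (hmono n)
  set C : ℝ := ‖S‖ / A with hC
  have hC0 : 0 ≤ C := div_nonneg (norm_nonneg S) hA.le
  -- Céa's lemma
  have key : ∀ N, ∀ u ∈ LinearMap.range (P N : H →ₗ[ℝ] H), ‖vN N - v‖ ≤ C * ‖v - u‖ := by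
    intro N u hu
    set e : H := v - vN N with he
    have horth : ∀ w ∈ LinearMap.range (P N : H →ₗ[ℝ] H), ⟪S e, w⟫ = 0 := by
      intro w hw
      have h1 := hv w
      have h2 := heq N w hw
      simp only [he, map_sub, inner_sub_left, h1, h2, sub_self]
    have hw : u - vN N ∈ LinearMap.range (P N : H →ₗ[ℝ] H) := sub_mem hu (hmem N)
    have hsplit : ⟪S e, e⟫ = ⟪S e, v - u⟫ := by
      have hdecomp : e = (v - u) + (u - vN N) := by rw [he]; abel
      calc ⟪S e, e⟫ = ⟪S e, (v - u) + (u - vN N)⟫ := by rw [← hdecomp]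
        _ = ⟪S e, v - u⟫ + ⟪S e, u - vN N⟫ := inner_add_right _ _ _
        _ = ⟪S e, v - u⟫ := by rw [horth _ hw, add_zero]
    have h1 : A * ‖e‖ ^ 2 ≤ ‖S‖ * ‖e‖ * ‖v - u‖ :=
      calc A * ‖e‖ ^ 2 ≤ ⟪S e, e⟫ := hlow e
        _ = ⟪S e, v - u⟫ := hsplit
        _ ≤ ‖S e‖ * ‖v - u‖ := real_inner_le_norm _ _
        _ ≤ ‖S‖ * ‖e‖ * ‖v - u‖ :=
            mul_le_mul_of_nonneg_right (S.le_opNorm e) (norm_nonneg _)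
    have hne : ‖vN N - v‖ = ‖e‖ := by rw [he, norm_sub_rev]
    rw [hne]
    rcases (norm_nonneg e).eq_or_lt with h0 | hpos
    · rw [← h0]
      positivity
    · have h2 : A * ‖e‖ ≤ ‖S‖ * ‖v - u‖ := by nlinarith [sq_nonneg ‖e‖]
      rw [hC, div_mul_eq_mul_div, le_div_iff₀ hA]
      nlinarith
  rw [Metric.tendsto_atTop]
  intro ε hε
  have hδ : 0 < ε / (C + 1) := by positivity
  have hvmem : v ∈ closure (⋃ N, (LinearMap.range (P N : H →ₗ[ℝ] H) : Set H)) := hdense v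
  rw [Metric.mem_closure_iff] at hvmem
  obtain ⟨u, hu, hdist⟩ := hvmem _ hδ
  obtain ⟨N0, hN0⟩ := Set.mem_iUnion.mp hu
  refine ⟨N0, fun N hN => ?_⟩
  have hk := key N u (hmono' N0 N hN hN0)
  rw [dist_eq_norm] at hdist
  rw [Real.dist_eq, sub_zero, abs_of_nonneg (norm_nonneg _)]
  have : C * ‖v - u‖ < ε := by
    have h1 : C * ‖v - u‖ ≤ C * (ε / (C + 1)) :=
      mul_le_mul_of_nonneg_left hdist.le hC0
    have h2 : C * (ε / (C + 1)) < ε := by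
      rw [mul_div_assoc']
      rw [div_lt_iff₀ (by linarith)]
      nlinarith
    linarith
  linarith
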